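/- Let μ and ν be fully supported probability measures on [q]^V (V finite with N vertices, q ≥ 3), let P and Q be the Glauber dynamics for μ and ν, and let X ∼ μ and Y ∼ ν. If P is contracting with rate κ ∈ [0,1) with respect to the Hamming distance d_H (for all σ, τ there exists a coupling of P(σ,·) and P(τ,·) whose expected Hamming distance is at most κ·d_H(σ,τ)), then for every function h : [q]^V → ℝ, |E h(X) − E h(Y)| ≤ (‖L(h)‖_∞/(N(1−κ))) · E[‖T(Y)‖₁], where ‖T(σ)‖₁ := ∑_{v∈V} T_v(σ). -/

import Mathlib

noncomputable section
attribute [local instance] Classical.propDecidable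

open Finset

variable {V : Type*}

/-- A probability measure on a finite set. -/
def IsProbMeasure {Ω : Type*} [Fintype Ω] (μ : Ω → ℝ) : Prop :=
  (∀ x, 0 ≤ μ x) ∧ ∑ x, μ x = 1

/-- `γ` is a coupling of `μ₁` and `μ₂`. -/
def IsCoupling {Ω : Type*} [Fintype Ω] (γ : Ω × Ω → ℝ) (μ₁ μ₂ : Ω → ℝ) : Prop :=
  (∀ p, 0 ≤ γ p) ∧ (∀ a, ∑ b, γ (a, b) = μ₁ a) ∧ (∀ b, ∑ a, γ (a, b) = μ₂ b)

/-- The Hamming distance between two configurations (as a real number). -/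
def hamming [Fintype V] {q : ℕ} (σ τ : V → Fin q) : ℝ :=
  ((Finset.univ.filter fun v => σ v ≠ τ v).card : ℝ)

/-- The Lipschitz constant of `h` in the coordinate `v`. -/
def Lv [Fintype V] {q : ℕ} (h : (V → Fin q) → ℝ) (v : V) : ℝ :=
  sSup {d : ℝ | ∃ σ τ : V → Fin q, (∀ w, w ≠ v → σ w = τ w) ∧ d = |h σ - h τ|}

/-- `‖L(h)‖_∞`, the maximum coordinatewise Lipschitz constant of `h`. -/
def Lnorm [Fintype V] {q : ℕ} (h : (V → Fin q) → ℝ) : ℝ :=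
  sSup {d : ℝ | ∃ v : V, d = Lv h v}

/-- The conditional spin distribution `μ_v(k | σ)`. -/
def condSpin [Fintype V] {q : ℕ} (μ : (V → Fin q) → ℝ) (v : V)
    (σ : V → Fin q) (k : Fin q) : ℝ :=
  μ (Function.update σ v k) / ∑ k' : Fin q, μ (Function.update σ v k')

/-- The Glauber dynamics transition matrix for the measure `μ` on `[q]^V`. -/
def glauber [Fintype V] {q : ℕ} (μ : (V → Fin q) → ℝ) (σ τ : V → Fin q) : ℝ :=
  (Fintype.card V : ℝ)⁻¹ *
    ∑ v : V, if ∀ w, w ≠ v → τ w = σ w then condSpin μ v σ (τ v) else 0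

/-- Total variation distance between two measures on a finite set. -/
def tvDist {Ω : Type*} [Fintype Ω] (p r : Ω → ℝ) : ℝ := (∑ σ, |p σ - r σ|) / 2
set_option linter.unusedSectionVars false
section Aux
variable [Fintype V] {q : ℕ}

lemma agree_iff (σ τ : V → Fin q) (v : V) :
    (∀ w, w ≠ v → τ w = σ w) ↔ τ = Function.update σ v (τ v) := by
  constructor
  · intro h; funext w
    by_cases hw : w = v
    · subst hw; simp
    · rw [Function.update_of_ne hw]; exact h w hw
  · intro h w hw
    conv_lhs => rw [h]
    rw [Function.update_of_ne hw]

lemma sum_update' (σ : V → Fin q) (v : V) (F : (V → Fin q) → Fin q → ℝ) :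
    ∑ τ : V → Fin q, (if ∀ w, w ≠ v → τ w = σ w then F τ (τ v) else 0)
      = ∑ k, F (Function.update σ v k) k := by
  have key : ∀ τ : V → Fin q, (if ∀ w, w ≠ v → τ w = σ w then F τ (τ v) else 0)
      = ∑ k, if τ = Function.update σ v k then F (Function.update σ v k) k else 0 := by
    intro τ
    by_cases hτ : ∀ w, w ≠ v → τ w = σ w
    · rw [if_pos hτ, Finset.sum_eq_single (τ v)]
      · rw [if_pos ((agree_iff σ τ v).1 hτ), ← (agree_iff σ τ v).1 hτ]
      · intro k _ hk
        rw [if_neg]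
        intro he; apply hk; rw [he, Function.update_self]
      · intro hk; exact absurd (Finset.mem_univ _) hk
    · rw [if_neg hτ]
      symm; apply Finset.sum_eq_zero
      intro k _
      rw [if_neg]
      intro he; apply hτ; intro w hw; rw [he, Function.update_of_ne hw]
  simp_rw [key]
  rw [Finset.sum_comm]
  apply Finset.sum_congr rfl
  intro k _
  simp

lemma condSpin_nonneg (μ : (V → Fin q) → ℝ) (hμpos : ∀ σ, 0 < μ σ) (v : V)
    (σ : V → Fin q) (k : Fin q) : 0 ≤ condSpin μ v σ k := by
  unfold condSpin
  apply div_nonneg (hμpos _).le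
  exact Finset.sum_nonneg fun k' _ => (hμpos _).le

lemma condSpin_sum (hq : 0 < q) (μ : (V → Fin q) → ℝ) (hμpos : ∀ σ, 0 < μ σ) (v : V)
    (σ : V → Fin q) : ∑ k, condSpin μ v σ k = 1 := by
  haveI : Nonempty (Fin q) := ⟨⟨0, hq⟩⟩
  unfold condSpin
  rw [← Finset.sum_div]
  apply div_self
  exact (Finset.sum_pos (fun k _ => hμpos _) Finset.univ_nonempty).ne'

lemma act_eq (μ g : (V → Fin q) → ℝ) (σ : V → Fin q) :
    ∑ τ, glauber μ σ τ * g τ = (Fintype.card V : ℝ)⁻¹ *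
      ∑ v, ∑ k, condSpin μ v σ k * g (Function.update σ v k) := by
  unfold glauber
  simp_rw [mul_assoc]
  rw [← Finset.mul_sum]
  congr 1
  simp_rw [Finset.sum_mul, ite_mul, zero_mul]
  rw [Finset.sum_comm]
  apply Finset.sum_congr rfl
  intro v _
  exact sum_update' σ v (fun τ k => condSpin μ v σ k * g τ)

lemma glauber_nonneg (μ : (V → Fin q) → ℝ) (hμpos : ∀ σ, 0 < μ σ) (σ τ : V → Fin q) :
    0 ≤ glauber μ σ τ := by
  unfold glauber
  apply mul_nonneg (by positivity)
  apply Finset.sum_nonneg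
  intro v _
  split
  · exact condSpin_nonneg μ hμpos v σ _
  · exact le_refl _

lemma glauber_sum_one [Nonempty V] (hq : 0 < q) (μ : (V → Fin q) → ℝ)
    (hμpos : ∀ σ, 0 < μ σ) (σ : V → Fin q) : ∑ τ, glauber μ σ τ = 1 := by
  have := act_eq μ (fun _ => 1) σ
  simp only [mul_one] at this
  rw [this]
  have : ∀ v : V, ∑ k, condSpin μ v σ k = 1 := fun v => condSpin_sum hq μ hμpos v σ
  simp [this]

end Aux
set_option linter.unusedSectionVars false
section Aux2
variable [Fintype V] {q : ℕ}

lemma glauber_rev (hq : 0 < q) (ν : (V → Fin q) → ℝ) (hνpos : ∀ σ, 0 < ν σ)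
    (σ τ : V → Fin q) : ν σ * glauber ν σ τ = ν τ * glauber ν τ σ := by
  haveI : Nonempty (Fin q) := ⟨⟨0, hq⟩⟩
  unfold glauber
  have key : (ν σ * ∑ v : V, if ∀ w, w ≠ v → τ w = σ w then condSpin ν v σ (τ v) else 0)
      = ν τ * ∑ v : V, if ∀ w, w ≠ v → σ w = τ w then condSpin ν v τ (σ v) else 0 := by
    rw [Finset.mul_sum, Finset.mul_sum]
    apply Finset.sum_congr rfl
    intro v _
    by_cases hA : ∀ w, w ≠ v → τ w = σ w
    · have hA' : ∀ w, w ≠ v → σ w = τ w := fun w hw => (hA w hw).symm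
      rw [if_pos hA, if_pos hA']
      have h1 : Function.update σ v (τ v) = τ := ((agree_iff σ τ v).1 hA).symm
      have h2 : Function.update τ v (σ v) = σ := ((agree_iff τ σ v).1 hA').symm
      have hupd : ∀ k : Fin q, Function.update σ v k = Function.update τ v k := by
        intro k; funext w
        by_cases hw : w = v
        · subst hw; simp
        · rw [Function.update_of_ne hw, Function.update_of_ne hw]
          exact (hA w hw).symm
      have hZ : ∑ k' : Fin q, ν (Function.update σ v k') = ∑ k' : Fin q, ν (Function.update τ v k') :=
        Finset.sum_congr rfl fun k _ => by rw [hupd k]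
      unfold condSpin
      rw [h1, h2, hZ]
      ring
    · have hA' : ¬ ∀ w, w ≠ v → σ w = τ w := by
        intro hc; exact hA fun w hw => (hc w hw).symm
      rw [if_neg hA, if_neg hA', mul_zero, mul_zero]
  calc ν σ * ((Fintype.card V : ℝ)⁻¹ * ∑ v : V, if ∀ w, w ≠ v → τ w = σ w then condSpin ν v σ (τ v) else 0)
      = (Fintype.card V : ℝ)⁻¹ * (ν σ * ∑ v : V, if ∀ w, w ≠ v → τ w = σ w then condSpin ν v σ (τ v) else 0) := by ring
    _ = (Fintype.card V : ℝ)⁻¹ * (ν τ * ∑ v : V, if ∀ w, w ≠ v → σ w = τ w then condSpin ν v τ (σ v) else 0) := by rw [key]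
    _ = ν τ * ((Fintype.card V : ℝ)⁻¹ * ∑ v : V, if ∀ w, w ≠ v → σ w = τ w then condSpin ν v τ (σ v) else 0) := by ring

lemma act_stationary [Nonempty V] (hq : 0 < q) (ν : (V → Fin q) → ℝ)
    (hνpos : ∀ σ, 0 < ν σ) (g : (V → Fin q) → ℝ) :
    ∑ σ, ν σ * ∑ τ, glauber ν σ τ * g τ = ∑ σ, ν σ * g σ := by
  have : ∀ σ : V → Fin q, ν σ * ∑ τ, glauber ν σ τ * g τ
      = ∑ τ, ν τ * glauber ν τ σ * g τ := by
    intro σ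
    rw [Finset.mul_sum]
    apply Finset.sum_congr rfl
    intro τ _
    rw [← mul_assoc, glauber_rev hq ν hνpos σ τ]
  simp_rw [this]
  rw [Finset.sum_comm]
  apply Finset.sum_congr rfl
  intro τ _
  have e : ∑ σ, ν τ * glauber ν τ σ * g τ = (∑ σ, glauber ν τ σ) * (ν τ * g τ) := by
    rw [Finset.sum_mul]; apply Finset.sum_congr rfl; intro σ _; ring
  rw [e, glauber_sum_one hq ν hνpos τ, one_mul]

lemma signed_upper (hq : 0 < q) (p r a : Fin q → ℝ) (hpr : ∑ k, p k = ∑ k, r k)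
    (c : ℝ) (hc : ∀ k k', |a k - a k'| ≤ c) :
    ∑ k, (p k - r k) * a k ≤ tvDist p r * c := by
  haveI : Nonempty (Fin q) := ⟨⟨0, hq⟩⟩
  set d : Fin q → ℝ := fun k => p k - r k with hd
  have hd0 : ∑ k, d k = 0 := by
    have e : ∑ k, d k = ∑ k, p k - ∑ k, r k := Finset.sum_sub_distrib _ _
    rw [e, hpr, sub_self]
  have hsplit : ∀ x : ℝ, x = max x 0 - max (-x) 0 := by
    intro x; rcases le_total x 0 with hx | hx
    · rw [max_eq_right hx, max_eq_left (by linarith)]; ring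
    · rw [max_eq_left hx, max_eq_right (by linarith)]; ring
  have habs : ∀ x : ℝ, |x| = max x 0 + max (-x) 0 := by
    intro x; rcases le_total x 0 with hx | hx
    · rw [abs_of_nonpos hx, max_eq_right hx, max_eq_left (by linarith)]; ring
    · rw [abs_of_nonneg hx, max_eq_left hx, max_eq_right (by linarith)]; ring
  set s := ∑ k, max (d k) 0 with hs
  have hs' : ∑ k, max (-(d k)) 0 = s := by
    have e2 : ∑ k, (max (d k) 0 - max (-(d k)) 0) = 0 := by
      calc ∑ k, (max (d k) 0 - max (-(d k)) 0) = ∑ k, d k :=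
            Finset.sum_congr rfl fun k _ => (hsplit (d k)).symm
        _ = 0 := hd0
    rw [Finset.sum_sub_distrib] at e2
    linarith
  have htv : tvDist p r = s := by
    unfold tvDist
    have : ∀ k, |p k - r k| = max (d k) 0 + max (-(d k)) 0 := fun k => habs (d k)
    rw [Finset.sum_congr rfl fun k _ => this k, Finset.sum_add_distrib, hs']
    ring
  -- max and min of a
  obtain ⟨kM, _, hkM⟩ := Finset.exists_max_image Finset.univ a Finset.univ_nonempty
  obtain ⟨km, _, hkm⟩ := Finset.exists_min_image Finset.univ a Finset.univ_nonempty
  have hMm : a kM - a km ≤ c := le_trans (le_abs_self _) (hc kM km)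
  have key : ∀ k, d k * a k ≤ max (d k) 0 * a kM - max (-(d k)) 0 * a km := by
    intro k
    have h1 : max (d k) 0 * a k ≤ max (d k) 0 * a kM :=
      mul_le_mul_of_nonneg_left (hkM k (Finset.mem_univ k)) (le_max_right _ _)
    have h2 : max (-(d k)) 0 * a km ≤ max (-(d k)) 0 * a k :=
      mul_le_mul_of_nonneg_left (hkm k (Finset.mem_univ k)) (le_max_right _ _)
    calc d k * a k = max (d k) 0 * a k - max (-(d k)) 0 * a k := by
          rw [← sub_mul, ← hsplit (d k)]
      _ ≤ max (d k) 0 * a kM - max (-(d k)) 0 * a km := by linarith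
  have hsum : ∑ k, d k * a k ≤ s * a kM - s * a km := by
    calc ∑ k, d k * a k ≤ ∑ k, (max (d k) 0 * a kM - max (-(d k)) 0 * a km) :=
          Finset.sum_le_sum fun k _ => key k
      _ = s * a kM - s * a km := by
          rw [Finset.sum_sub_distrib, ← Finset.sum_mul, ← Finset.sum_mul, hs']
  have hs0 : 0 ≤ s := Finset.sum_nonneg fun k _ => le_max_right _ _
  calc ∑ k, (p k - r k) * a k = ∑ k, d k * a k := rfl
    _ ≤ s * a kM - s * a km := hsum
    _ = s * (a kM - a km) := by ring
    _ ≤ s * c := mul_le_mul_of_nonneg_left hMm hs0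
    _ = tvDist p r * c := by rw [htv]

lemma signed_bound (hq : 0 < q) (p r a : Fin q → ℝ) (hpr : ∑ k, p k = ∑ k, r k)
    (c : ℝ) (hc : ∀ k k', |a k - a k'| ≤ c) :
    |∑ k, (p k - r k) * a k| ≤ tvDist p r * c := by
  rw [abs_le]
  constructor
  · have := signed_upper hq p r (fun k => -(a k)) hpr c
      (fun k k' => by rw [show -a k - -a k' = -(a k - a k') by ring, abs_neg]; exact hc k k')
    simp only [mul_neg, Finset.sum_neg_distrib] at this
    linarith
  · exact signed_upper hq p r a hpr c hc

end Aux2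
section Aux3
variable [Fintype V] {q : ℕ}

lemma hamming_nonneg (σ τ : V → Fin q) : 0 ≤ hamming σ τ := Nat.cast_nonneg _

lemma hamming_le_card (σ τ : V → Fin q) : hamming σ τ ≤ Fintype.card V := by
  unfold hamming
  exact_mod_cast Finset.card_filter_le _ _

lemma hamming_update_le (σ : V → Fin q) (v : V) (k k' : Fin q) :
    hamming (Function.update σ v k) (Function.update σ v k') ≤ 1 := by
  unfold hamming
  have : (Finset.univ.filter fun w => Function.update σ v k w ≠ Function.update σ v k' w)
      ⊆ {v} := by
    intro w hw
    simp only [Finset.mem_filter] at hw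
    simp only [Finset.mem_singleton]
    by_contra hwv
    exact hw.2 (by rw [Function.update_of_ne hwv, Function.update_of_ne hwv])
  have := Finset.card_le_card this
  simp only [Finset.card_singleton] at this
  exact_mod_cast this

lemma Lv_bddAbove (h : (V → Fin q) → ℝ) (v : V) :
    BddAbove {d : ℝ | ∃ σ τ : V → Fin q, (∀ w, w ≠ v → σ w = τ w) ∧ d = |h σ - h τ|} := by
  apply Set.Finite.bddAbove
  apply Set.Finite.subset
    (Set.finite_range fun p : (V → Fin q) × (V → Fin q) => |h p.1 - h p.2|)
  rintro d ⟨σ, τ, -, rfl⟩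
  exact ⟨(σ, τ), rfl⟩

lemma abs_le_Lv (h : (V → Fin q) → ℝ) (v : V) (σ τ : V → Fin q)
    (hagree : ∀ w, w ≠ v → σ w = τ w) : |h σ - h τ| ≤ Lv h v :=
  le_csSup (Lv_bddAbove h v) ⟨σ, τ, hagree, rfl⟩

lemma Lv_le_Lnorm (h : (V → Fin q) → ℝ) (v : V) : Lv h v ≤ Lnorm h := by
  have hbdd : BddAbove {d : ℝ | ∃ v : V, d = Lv h v} := by
    apply Set.Finite.bddAbove
    apply Set.Finite.subset (Set.finite_range fun v : V => Lv h v)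
    rintro d ⟨v, rfl⟩
    exact ⟨v, rfl⟩
  exact le_csSup hbdd ⟨v, rfl⟩

lemma Lnorm_nonneg [Nonempty V] (hq : 0 < q) (h : (V → Fin q) → ℝ) : 0 ≤ Lnorm h := by
  haveI : Nonempty (Fin q) := ⟨⟨0, hq⟩⟩
  obtain ⟨v⟩ := (inferInstance : Nonempty V)
  refine le_trans ?_ (Lv_le_Lnorm h v)
  have := abs_le_Lv h v (Classical.arbitrary _) (Classical.arbitrary _) (fun _ _ => rfl)
  simpa using this

lemma lip_Lnorm [Nonempty V] (hq : 0 < q) (h : (V → Fin q) → ℝ) (σ τ : V → Fin q) :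
    |h σ - h τ| ≤ Lnorm h * hamming σ τ := by
  suffices H : ∀ n (σ τ : V → Fin q),
      (Finset.univ.filter fun v => σ v ≠ τ v).card = n → |h σ - h τ| ≤ Lnorm h * n from
    H _ σ τ rfl
  intro n
  induction n with
  | zero =>
    intro σ τ hcard
    have hst : σ = τ := by
      funext v
      by_contra hv
      have : v ∈ Finset.univ.filter fun v => σ v ≠ τ v := by
        simp [hv]
      rw [Finset.card_eq_zero] at hcard
      rw [hcard] at this
      exact absurd this (Finset.notMem_empty v)
    simp [hst]
  | succ n ih =>
    intro σ τ hcard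
    have hne : (Finset.univ.filter fun v => σ v ≠ τ v).Nonempty :=
      Finset.card_pos.1 (by rw [hcard]; exact Nat.succ_pos n)
    obtain ⟨v, hv⟩ := hne
    set σ' := Function.update σ v (τ v) with hσ'
    have hfilter : (Finset.univ.filter fun w => σ' w ≠ τ w)
        = (Finset.univ.filter fun w => σ w ≠ τ w).erase v := by
      ext w
      simp only [Finset.mem_filter, Finset.mem_erase, Finset.mem_univ, true_and]
      constructor
      · intro hw
        by_cases hwv : w = v
        · subst hwv; rw [hσ', Function.update_self] at hw; exact absurd rfl hw
        · exact ⟨hwv, by rwa [hσ', Function.update_of_ne hwv] at hw⟩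
      · rintro ⟨hwv, hw⟩
        rwa [hσ', Function.update_of_ne hwv]
    have hcard' : (Finset.univ.filter fun w => σ' w ≠ τ w).card = n := by
      rw [hfilter, Finset.card_erase_of_mem hv, hcard]
      rfl
    have h1 : |h σ - h σ'| ≤ Lnorm h :=
      le_trans (abs_le_Lv h v σ σ' (fun w hw => (Function.update_of_ne hw _ _).symm))
        (Lv_le_Lnorm h v)
    have h2 : |h σ' - h τ| ≤ Lnorm h * n := ih σ' τ hcard'
    calc |h σ - h τ| ≤ |h σ - h σ'| + |h σ' - h τ| := abs_sub_le _ _ _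
      _ ≤ Lnorm h + Lnorm h * n := add_le_add h1 h2
      _ = Lnorm h * (n + 1 : ℕ) := by push_cast; ring

end Aux3
section Aux4
variable [Fintype V] {q : ℕ}

lemma act_contract (μ : (V → Fin q) → ℝ) (κ : ℝ)
    (hcontr : ∀ σ τ : V → Fin q, ∃ γ : (V → Fin q) × (V → Fin q) → ℝ,
      IsCoupling γ (glauber μ σ) (glauber μ τ) ∧
      ∑ p : (V → Fin q) × (V → Fin q), γ p * hamming p.1 p.2 ≤ κ * hamming σ τ)
    (g : (V → Fin q) → ℝ) (c : ℝ) (hc0 : 0 ≤ c)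
    (hg : ∀ σ τ, |g σ - g τ| ≤ c * hamming σ τ) (σ τ : V → Fin q) :
    |(∑ ρ, glauber μ σ ρ * g ρ) - ∑ ρ, glauber μ τ ρ * g ρ| ≤ κ * c * hamming σ τ := by
  obtain ⟨γ, ⟨hγ0, hγ1, hγ2⟩, hγκ⟩ := hcontr σ τ
  have e1 : ∑ ρ, glauber μ σ ρ * g ρ = ∑ p : (V → Fin q) × (V → Fin q), γ p * g p.1 := by
    rw [Fintype.sum_prod_type]
    apply Finset.sum_congr rfl
    intro a _
    have e : ∑ y : V → Fin q, γ (a, y) * g (a, y).1 = ∑ y : V → Fin q, γ (a, y) * g a := rfl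
    rw [e, ← Finset.sum_mul, hγ1 a]
  have e2 : ∑ ρ, glauber μ τ ρ * g ρ = ∑ p : (V → Fin q) × (V → Fin q), γ p * g p.2 := by
    rw [Fintype.sum_prod_type, Finset.sum_comm]
    apply Finset.sum_congr rfl
    intro b _
    have e : ∑ x : V → Fin q, γ (x, b) * g (x, b).2 = ∑ x : V → Fin q, γ (x, b) * g b := rfl
    rw [e, ← Finset.sum_mul, hγ2 b]
  rw [e1, e2, ← Finset.sum_sub_distrib]
  calc |∑ p : (V → Fin q) × (V → Fin q), (γ p * g p.1 - γ p * g p.2)|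
      ≤ ∑ p : (V → Fin q) × (V → Fin q), |γ p * g p.1 - γ p * g p.2| :=
        Finset.abs_sum_le_sum_abs _ _
    _ ≤ ∑ p : (V → Fin q) × (V → Fin q), γ p * (c * hamming p.1 p.2) := by
        apply Finset.sum_le_sum
        intro p _
        rw [← mul_sub, abs_mul, abs_of_nonneg (hγ0 p)]
        exact mul_le_mul_of_nonneg_left (hg p.1 p.2) (hγ0 p)
    _ = c * ∑ p : (V → Fin q) × (V → Fin q), γ p * hamming p.1 p.2 := by
        rw [Finset.mul_sum]
        apply Finset.sum_congr rfl
        intro p _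
        ring
    _ ≤ c * (κ * hamming σ τ) := by
        apply mul_le_mul_of_nonneg_left hγκ hc0
    _ = κ * c * hamming σ τ := by ring

lemma step_bound [Nonempty V] (hq : 0 < q) (μ ν : (V → Fin q) → ℝ)
    (hμpos : ∀ σ, 0 < μ σ) (hνpos : ∀ σ, 0 < ν σ)
    (g : (V → Fin q) → ℝ) (c : ℝ) (hc0 : 0 ≤ c)
    (hgl : ∀ (σ : V → Fin q) (v : V) (k k' : Fin q),
      |g (Function.update σ v k) - g (Function.update σ v k')| ≤ c) :
    |(∑ σ, ν σ * g σ) - ∑ σ, ν σ * ∑ τ, glauber μ σ τ * g τ| ≤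
      c * (Fintype.card V : ℝ)⁻¹ *
        ∑ σ, ν σ * ∑ v : V, tvDist (condSpin μ v σ) (condSpin ν v σ) := by
  have hstat := act_stationary hq ν hνpos g
  rw [← hstat]
  have key : ∀ σ : V → Fin q,
      |(∑ τ, glauber ν σ τ * g τ) - ∑ τ, glauber μ σ τ * g τ| ≤
        c * (Fintype.card V : ℝ)⁻¹ * ∑ v : V, tvDist (condSpin μ v σ) (condSpin ν v σ) := by
    intro σ
    rw [act_eq ν g σ, act_eq μ g σ, ← mul_sub, ← Finset.sum_sub_distrib]
    rw [abs_mul, abs_of_nonneg (by positivity : (0:ℝ) ≤ (Fintype.card V : ℝ)⁻¹)]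
    rw [show c * (Fintype.card V : ℝ)⁻¹ * ∑ v : V, tvDist (condSpin μ v σ) (condSpin ν v σ)
      = (Fintype.card V : ℝ)⁻¹ * ∑ v : V, tvDist (condSpin μ v σ) (condSpin ν v σ) * c by
        rw [Finset.mul_sum, Finset.mul_sum]
        apply Finset.sum_congr rfl; intro v _; ring]
    apply mul_le_mul_of_nonneg_left _ (by positivity : (0:ℝ) ≤ (Fintype.card V : ℝ)⁻¹)
    calc |∑ v : V, ((∑ k, condSpin ν v σ k * g (Function.update σ v k)) -
            ∑ k, condSpin μ v σ k * g (Function.update σ v k))|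
        ≤ ∑ v : V, |(∑ k, condSpin ν v σ k * g (Function.update σ v k)) -
            ∑ k, condSpin μ v σ k * g (Function.update σ v k)| :=
          Finset.abs_sum_le_sum_abs _ _
      _ ≤ ∑ v : V, tvDist (condSpin μ v σ) (condSpin ν v σ) * c := by
          apply Finset.sum_le_sum
          intro v _
          have e : (∑ k, condSpin ν v σ k * g (Function.update σ v k)) -
              ∑ k, condSpin μ v σ k * g (Function.update σ v k)
              = -∑ k, (condSpin μ v σ k - condSpin ν v σ k) * g (Function.update σ v k) := by
            rw [← Finset.sum_sub_distrib, ← Finset.sum_neg_distrib]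
            apply Finset.sum_congr rfl; intro k _; ring
          rw [e, abs_neg]
          refine signed_bound hq _ _ _ ?_ c ?_
          · rw [condSpin_sum hq μ hμpos v σ, condSpin_sum hq ν hνpos v σ]
          · intro k k'
            exact hgl σ v k k'
  have hsplit : (∑ σ, ν σ * ∑ τ, glauber ν σ τ * g τ) - ∑ σ, ν σ * ∑ τ, glauber μ σ τ * g τ
      = ∑ σ, ν σ * ((∑ τ, glauber ν σ τ * g τ) - ∑ τ, glauber μ σ τ * g τ) := by
    rw [← Finset.sum_sub_distrib]
    apply Finset.sum_congr rfl; intro σ _; ring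
  rw [hsplit]
  calc |∑ σ, ν σ * ((∑ τ, glauber ν σ τ * g τ) - ∑ τ, glauber μ σ τ * g τ)|
      ≤ ∑ σ, |ν σ * ((∑ τ, glauber ν σ τ * g τ) - ∑ τ, glauber μ σ τ * g τ)| :=
        Finset.abs_sum_le_sum_abs _ _
    _ ≤ ∑ σ, ν σ * (c * (Fintype.card V : ℝ)⁻¹ *
          ∑ v : V, tvDist (condSpin μ v σ) (condSpin ν v σ)) := by
        apply Finset.sum_le_sum
        intro σ _
        rw [abs_mul, abs_of_nonneg (hνpos σ).le]
        exact mul_le_mul_of_nonneg_left (key σ) (hνpos σ).le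
    _ = c * (Fintype.card V : ℝ)⁻¹ *
          ∑ σ, ν σ * ∑ v : V, tvDist (condSpin μ v σ) (condSpin ν v σ) := by
        rw [Finset.mul_sum]
        apply Finset.sum_congr rfl; intro σ _; ring

end Aux4
theorem stmt7 [Fintype V] [Nonempty V] (q : ℕ) (hq : 3 ≤ q)
    (μ ν : (V → Fin q) → ℝ) (hμ : IsProbMeasure μ) (hν : IsProbMeasure ν)
    (hμpos : ∀ σ, 0 < μ σ) (hνpos : ∀ σ, 0 < ν σ)
    (κ : ℝ) (hκ0 : 0 ≤ κ) (hκ1 : κ < 1)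
    (hcontr : ∀ σ τ : V → Fin q, ∃ γ : (V → Fin q) × (V → Fin q) → ℝ,
      IsCoupling γ (glauber μ σ) (glauber μ τ) ∧
      ∑ p : (V → Fin q) × (V → Fin q), γ p * hamming p.1 p.2 ≤ κ * hamming σ τ)
    (h : (V → Fin q) → ℝ) :
    |(∑ σ, μ σ * h σ) - ∑ σ, ν σ * h σ| ≤
      Lnorm h / (Fintype.card V * (1 - κ)) *
        ∑ σ, ν σ * ∑ v : V, tvDist (condSpin μ v σ) (condSpin ν v σ) := by
  have hq0 : 0 < q := by omega
  have hNpos : (0:ℝ) < (Fintype.card V : ℝ) := by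
    exact_mod_cast Fintype.card_pos
  have hL0 : 0 ≤ Lnorm h := Lnorm_nonneg hq0 h
  have hS0 : 0 ≤ ∑ σ, ν σ * ∑ v : V, tvDist (condSpin μ v σ) (condSpin ν v σ) := by
    apply Finset.sum_nonneg
    intro σ _
    apply mul_nonneg (hνpos σ).le
    apply Finset.sum_nonneg
    intro v _
    unfold tvDist
    positivity
  set S := ∑ σ, ν σ * ∑ v : V, tvDist (condSpin μ v σ) (condSpin ν v σ) with hSdef
  set F : ((V → Fin q) → ℝ) → ((V → Fin q) → ℝ) := fun f σ => ∑ τ, glauber μ σ τ * f τ with hF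
  set g : ℕ → (V → Fin q) → ℝ := fun t => F^[t] h with hgdef
  have hg0 : g 0 = h := rfl
  have hgsucc : ∀ t σ, g (t+1) σ = ∑ τ, glauber μ σ τ * g t τ := by
    intro t σ
    show F^[t+1] h σ = _
    rw [Function.iterate_succ_apply']
  have hlip : ∀ t σ τ, |g t σ - g t τ| ≤ κ^t * Lnorm h * hamming σ τ := by
    intro t
    induction t with
    | zero =>
      intro σ τ
      simpa [hg0] using lip_Lnorm hq0 h σ τ
    | succ t ih =>
      intro σ τ
      have hcon := act_contract μ κ hcontr (g t) (κ^t * Lnorm h) (by positivity) ih σ τ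
      rw [hgsucc t σ, hgsucc t τ]
      calc |(∑ ρ, glauber μ σ ρ * g t ρ) - ∑ ρ, glauber μ τ ρ * g t ρ|
          ≤ κ * (κ^t * Lnorm h) * hamming σ τ := hcon
        _ = κ^(t+1) * Lnorm h * hamming σ τ := by ring
  have hstep : ∀ t, |(∑ σ, ν σ * g t σ) - ∑ σ, ν σ * g (t+1) σ|
      ≤ κ^t * (Lnorm h * (Fintype.card V : ℝ)⁻¹ * S) := by
    intro t
    have hgl : ∀ (σ : V → Fin q) (v : V) (k k' : Fin q),
        |g t (Function.update σ v k) - g t (Function.update σ v k')| ≤ κ^t * Lnorm h := by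
      intro σ v k k'
      calc |g t (Function.update σ v k) - g t (Function.update σ v k')|
          ≤ κ^t * Lnorm h * hamming (Function.update σ v k) (Function.update σ v k') :=
            hlip t _ _
        _ ≤ κ^t * Lnorm h * 1 :=
            mul_le_mul_of_nonneg_left (hamming_update_le σ v k k') (by positivity)
        _ = κ^t * Lnorm h := mul_one _
    have hsb := step_bound hq0 μ ν hμpos hνpos (g t) (κ^t * Lnorm h) (by positivity) hgl
    simp only [hgsucc t]
    calc |(∑ σ, ν σ * g t σ) - ∑ σ, ν σ * ∑ τ, glauber μ σ τ * g t τ|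
        ≤ κ^t * Lnorm h * (Fintype.card V : ℝ)⁻¹ * S := hsb
      _ = κ^t * (Lnorm h * (Fintype.card V : ℝ)⁻¹ * S) := by ring
  have hμstat : ∀ t, ∑ σ, μ σ * g t σ = ∑ σ, μ σ * h σ := by
    intro t
    induction t with
    | zero => rfl
    | succ t ih =>
      simp only [hgsucc t]
      rw [act_stationary hq0 μ hμpos (g t)]
      exact ih
  have htail : ∀ t, |(∑ σ, ν σ * g t σ) - ∑ σ, μ σ * h σ|
      ≤ κ^t * Lnorm h * (Fintype.card V : ℝ) := by
    intro t
    rw [← hμstat t]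
    have e : (∑ σ, ν σ * g t σ) - ∑ σ, μ σ * g t σ
        = ∑ σ, ∑ τ, ν σ * μ τ * (g t σ - g t τ) := by
      have e1 : ∀ σ : V → Fin q, ∑ τ, ν σ * μ τ * (g t σ - g t τ)
          = ν σ * g t σ - ν σ * ∑ τ, μ τ * g t τ := by
        intro σ
        have e0 : ∀ τ : V → Fin q, ν σ * μ τ * (g t σ - g t τ)
            = (ν σ * g t σ) * μ τ - ν σ * (μ τ * g t τ) := fun τ => by ring
        rw [Finset.sum_congr rfl fun τ _ => e0 τ, Finset.sum_sub_distrib,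
          ← Finset.mul_sum, ← Finset.mul_sum, hμ.2, mul_one]
      rw [Finset.sum_congr rfl fun σ _ => e1 σ, Finset.sum_sub_distrib,
        ← Finset.sum_mul, hν.2, one_mul, ← Finset.sum_sub_distrib]
    rw [e]
    calc |∑ σ, ∑ τ, ν σ * μ τ * (g t σ - g t τ)|
        ≤ ∑ σ, |∑ τ, ν σ * μ τ * (g t σ - g t τ)| := Finset.abs_sum_le_sum_abs _ _
      _ ≤ ∑ σ : V → Fin q, ∑ τ, |ν σ * μ τ * (g t σ - g t τ)| :=
          Finset.sum_le_sum fun σ _ => Finset.abs_sum_le_sum_abs _ _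
      _ ≤ ∑ σ : V → Fin q, ∑ τ, ν σ * μ τ * (κ^t * Lnorm h * (Fintype.card V : ℝ)) := by
          apply Finset.sum_le_sum
          intro σ _
          apply Finset.sum_le_sum
          intro τ _
          have hb : |g t σ - g t τ| ≤ κ^t * Lnorm h * (Fintype.card V : ℝ) := by
            calc |g t σ - g t τ| ≤ κ^t * Lnorm h * hamming σ τ := hlip t σ τ
              _ ≤ κ^t * Lnorm h * (Fintype.card V : ℝ) :=
                  mul_le_mul_of_nonneg_left (hamming_le_card σ τ) (by positivity)
          rw [abs_mul, abs_mul, abs_of_nonneg (hνpos σ).le, abs_of_nonneg (hμpos τ).le]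
          exact mul_le_mul_of_nonneg_left hb (mul_nonneg (hνpos σ).le (hμpos τ).le)
      _ = κ^t * Lnorm h * (Fintype.card V : ℝ) := by
          have e2 : ∀ σ : V → Fin q,
              ∑ τ : V → Fin q, ν σ * μ τ * (κ^t * Lnorm h * (Fintype.card V : ℝ))
              = ν σ * (κ^t * Lnorm h * (Fintype.card V : ℝ)) := by
            intro σ
            rw [Finset.sum_congr rfl (fun τ _ => (by ring :
              ν σ * μ τ * (κ^t * Lnorm h * (Fintype.card V : ℝ))
              = (ν σ * (κ^t * Lnorm h * (Fintype.card V : ℝ))) * μ τ)),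
              ← Finset.mul_sum, hμ.2, mul_one]
          rw [Finset.sum_congr rfl (fun σ _ => e2 σ),
            Finset.sum_congr rfl (fun σ _ => (by ring :
              ν σ * (κ^t * Lnorm h * (Fintype.card V : ℝ))
              = (κ^t * Lnorm h * (Fintype.card V : ℝ)) * ν σ)),
            ← Finset.mul_sum, hν.2, mul_one]
  have hgeom : ∀ n : ℕ, ∑ t ∈ Finset.range n, κ^t ≤ (1-κ)⁻¹ := by
    intro n
    rw [geom_sum_eq (by intro hx; rw [hx] at hκ1; exact lt_irrefl 1 hκ1 : κ ≠ 1)]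
    rw [div_le_iff_of_neg (by linarith : κ - 1 < 0)]
    have h1 : (1-κ)⁻¹ * (κ - 1) = -1 := by
      have : (1:ℝ) - κ ≠ 0 := by linarith
      field_simp
      ring
    rw [h1]
    have := pow_nonneg hκ0 n
    linarith
  have hmain : ∀ n : ℕ, |(∑ σ, ν σ * h σ) - ∑ σ, μ σ * h σ|
      ≤ Lnorm h / (Fintype.card V * (1-κ)) * S
        + κ^n * Lnorm h * (Fintype.card V : ℝ) := by
    intro n
    have tele : (∑ σ, ν σ * h σ) - ∑ σ, μ σ * h σ
        = (∑ t ∈ Finset.range n, ((∑ σ, ν σ * g t σ) - ∑ σ, ν σ * g (t+1) σ))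
          + ((∑ σ, ν σ * g n σ) - ∑ σ, μ σ * h σ) := by
      rw [Finset.sum_range_sub' (fun t => ∑ σ, ν σ * g t σ)]
      have hg0' : (∑ σ, ν σ * g 0 σ) = ∑ σ, ν σ * h σ := rfl
      rw [hg0']
      ring
    calc |(∑ σ, ν σ * h σ) - ∑ σ, μ σ * h σ|
        ≤ |∑ t ∈ Finset.range n, ((∑ σ, ν σ * g t σ) - ∑ σ, ν σ * g (t+1) σ)|
          + |(∑ σ, ν σ * g n σ) - ∑ σ, μ σ * h σ| := by
          rw [tele]; exact abs_add_le _ _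
      _ ≤ (∑ t ∈ Finset.range n, κ^t * (Lnorm h * (Fintype.card V : ℝ)⁻¹ * S))
          + κ^n * Lnorm h * (Fintype.card V : ℝ) :=
          add_le_add (le_trans (Finset.abs_sum_le_sum_abs _ _)
            (Finset.sum_le_sum fun t _ => hstep t)) (htail n)
      _ = (∑ t ∈ Finset.range n, κ^t) * (Lnorm h * (Fintype.card V : ℝ)⁻¹ * S)
          + κ^n * Lnorm h * (Fintype.card V : ℝ) := by
          rw [← Finset.sum_mul]
      _ ≤ (1-κ)⁻¹ * (Lnorm h * (Fintype.card V : ℝ)⁻¹ * S)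
          + κ^n * Lnorm h * (Fintype.card V : ℝ) := by
          have hnn : 0 ≤ Lnorm h * (Fintype.card V : ℝ)⁻¹ * S :=
            mul_nonneg (mul_nonneg hL0 (by positivity)) hS0
          exact add_le_add (mul_le_mul_of_nonneg_right (hgeom n) hnn) (le_refl _)
      _ = Lnorm h / (Fintype.card V * (1-κ)) * S
          + κ^n * Lnorm h * (Fintype.card V : ℝ) := by
          congr 1
          rw [div_eq_mul_inv, mul_inv]
          ring
  rw [abs_sub_comm]
  have hlim : Filter.Tendsto
      (fun n : ℕ => Lnorm h / (Fintype.card V * (1-κ)) * S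
        + κ^n * Lnorm h * (Fintype.card V : ℝ))
      Filter.atTop (nhds (Lnorm h / (Fintype.card V * (1-κ)) * S + 0)) := by
    apply Filter.Tendsto.add tendsto_const_nhds
    have h0 : Filter.Tendsto (fun n : ℕ => κ^n) Filter.atTop (nhds 0) :=
      tendsto_pow_atTop_nhds_zero_of_lt_one hκ0 hκ1
    have := (h0.mul_const (Lnorm h)).mul_const (Fintype.card V : ℝ)
    simpa using this
  have hfin := ge_of_tendsto' hlim hmain
  simpa using hfin
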